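/- Let e₁*, e₂*, e₃* be real numbers with |e₁*|, |e₂*|, |e₃*| ≤ 1, let A, B ∈ SO(3), and let R = B·diag(e₁*,e₂*,e₃*)·A. Assume the first two columns of R are not orthogonal, i.e., ⟨R e₁, R e₂⟩ ≠ 0. Let T be the real 3×2 matrix whose columns are the first two columns of R, and let t₁ ≥ t₂ ≥ 0 be such that t₁² and t₂² are the eigenvalues (with multiplicity) of Tᵀ·T. Then for every O ∈ SO(3), h₂((1+(O·R)₁₁)/2) + h₂((1+(O·R)₂₂)/2) > h₂((1+t₁)/2) + h₂((1+t₂)/2). -/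

import Mathlib

set_option maxHeartbeats 2000000

/-- Binary entropy function (base-2 logarithm), with the convention `0 * log 0 = 0`. -/
noncomputable def h2 (p : ℝ) : ℝ := -(p * Real.logb 2 p) - (1 - p) * Real.logb 2 (1 - p)

/-- `M` is a real 3×3 special orthogonal matrix. -/
def SO3 (M : Matrix (Fin 3) (Fin 3) ℝ) : Prop := M.transpose * M = 1 ∧ M.det = 1

lemma h2_eq_binEntropy (p : ℝ) : h2 p = Real.binEntropy p / Real.log 2 := by
  simp [h2, Real.binEntropy, Real.log_inv, Real.logb]
  ring

lemma h2_symm (p : ℝ) : h2 (1 - p) = h2 p := by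
  have h : (1:ℝ) - (1 - p) = p := by ring
  simp only [h2, h]
  ring

lemma F_even (x : ℝ) : h2 ((1 + -x)/2) = h2 ((1 + x)/2) := by
  have h : (1 + -x)/2 = 1 - (1 + x)/2 := by ring
  rw [h, h2_symm]

lemma F_anti {x y : ℝ} (hx : 0 ≤ x) (hxy : x < y) (hy : y ≤ 1) :
    h2 ((1 + y)/2) < h2 ((1 + x)/2) := by
  rw [h2_eq_binEntropy, h2_eq_binEntropy]
  have hlog : (0:ℝ) < Real.log 2 := Real.log_pos (by norm_num)
  have h := Real.binEntropy_strictAntiOn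
    (Set.mem_Icc.mpr ⟨by norm_num; linarith, by linarith⟩)
    (Set.mem_Icc.mpr ⟨by norm_num; linarith, by linarith⟩)
    (show (1+x)/2 < (1+y)/2 by linarith)
  gcongr

lemma F_antile {x y : ℝ} (hx : 0 ≤ x) (hxy : x ≤ y) (hy : y ≤ 1) :
    h2 ((1 + y)/2) ≤ h2 ((1 + x)/2) := by
  rcases eq_or_lt_of_le hxy with h | h
  · rw [h]
  · exact le_of_lt (F_anti hx h hy)

lemma F_concave (x y μ ν : ℝ) (hx0 : 0 ≤ x) (hx1 : x ≤ 1) (hy0 : 0 ≤ y) (hy1 : y ≤ 1)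
    (hxy : x ≠ y) (hμ : 0 < μ) (hν : 0 < ν) (hμν : μ + ν = 1) :
    μ * h2 ((1 + x)/2) + ν * h2 ((1 + y)/2) < h2 ((1 + (μ*x + ν*y))/2) := by
  have hlog : (0:ℝ) < Real.log 2 := Real.log_pos (by norm_num)
  have hne : (1+x)/2 ≠ (1+y)/2 := fun h => hxy (by linarith [h])
  have h := Real.strictConcave_binEntropy.2
    (Set.mem_Icc.mpr ⟨by linarith, by linarith⟩)
    (Set.mem_Icc.mpr ⟨by linarith, by linarith⟩) hne hμ hν hμν
  simp only [smul_eq_mul] at h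
  have harg : μ * ((1+x)/2) + ν * ((1+y)/2) = (1 + (μ*x + ν*y))/2 := by
    have hμ' : μ = 1 - ν := by linarith
    rw [hμ']; ring
  rw [harg] at h
  rw [h2_eq_binEntropy, h2_eq_binEntropy, h2_eq_binEntropy]
  have hrw : μ * (Real.binEntropy ((1+x)/2) / Real.log 2) +
      ν * (Real.binEntropy ((1+y)/2) / Real.log 2)
      = (μ * Real.binEntropy ((1+x)/2) + ν * Real.binEntropy ((1+y)/2)) / Real.log 2 := by ring
  rw [hrw]
  gcongr

lemma schurF (t1 t2 a b : ℝ) (ht2 : 0 ≤ t2) (ht21 : t2 ≤ t1) (ht11 : t1 ≤ 1)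
    (ha0 : 0 ≤ a) (hb0 : 0 ≤ b) (hat : a < t1) (hbt : b < t1) (hsum : a + b ≤ t1 + t2) :
    h2 ((1 + t1)/2) + h2 ((1 + t2)/2) < h2 ((1 + a)/2) + h2 ((1 + b)/2) := by
  have ht21' : t2 ≤ 1 := le_trans ht21 ht11
  by_cases hb : b ≤ t2
  · have h1 : h2 ((1+t1)/2) < h2 ((1+a)/2) := F_anti ha0 hat ht11
    have h2' : h2 ((1+t2)/2) ≤ h2 ((1+b)/2) := F_antile hb0 hb ht21'
    linarith
  by_cases ha : a ≤ t2
  · have h1 : h2 ((1+t1)/2) < h2 ((1+b)/2) := F_anti hb0 hbt ht11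
    have h2' : h2 ((1+t2)/2) ≤ h2 ((1+a)/2) := F_antile ha0 ha ht21'
    linarith
  push_neg at ha hb
  set γ := a + b - t2 with hγ
  have hγa : a ≤ γ := by linarith
  have hγt1 : γ ≤ t1 := by linarith
  have hγ2 : t2 < γ := by linarith
  have hγ0 : 0 ≤ γ := by linarith
  have hγ1 : γ ≤ 1 := le_trans hγt1 ht11
  have hd : 0 < γ - t2 := by linarith
  set μ := (a - t2)/(γ - t2) with hμdef
  have hμ0 : 0 < μ := div_pos (by linarith) hd
  have hμ1 : μ < 1 := (div_lt_one hd).mpr (by linarith)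
  have hν0 : 0 < 1 - μ := by linarith
  have hxa : μ*γ + (1-μ)*t2 = a := by
    field_simp [hμdef]
    have hm : μ * (γ - t2) = a - t2 := by rw [hμdef]; exact div_mul_cancel₀ _ (ne_of_gt hd)
    linear_combination hm
  have hxb : (1-μ)*γ + μ*t2 = b := by
    have h1 : (1-μ)*γ + μ*t2 = γ + t2 - (μ*γ + (1-μ)*t2) := by ring
    rw [h1, hxa]; linarith [hγ]
  have hcon1 := F_concave γ t2 μ (1-μ) hγ0 hγ1 ht2 ht21'
    (by linarith [hγ2] : γ ≠ t2) hμ0 hν0 (by ring)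
  have hcon2 := F_concave γ t2 (1-μ) μ hγ0 hγ1 ht2 ht21'
    (by linarith [hγ2] : γ ≠ t2) hν0 hμ0 (by ring)
  rw [hxa] at hcon1
  rw [hxb] at hcon2
  have hFγ : h2 ((1+t1)/2) ≤ h2 ((1+γ)/2) := F_antile hγ0 hγt1 ht11
  linarith

lemma cs3w (w0 w1 w2 x0 x1 x2 y0 y1 y2 : ℝ) (h0 : 0 ≤ w0) (h1 : 0 ≤ w1) (h2 : 0 ≤ w2) :
    (w0*x0*y0 + w1*x1*y1 + w2*x2*y2)^2 ≤
      (w0*x0^2 + w1*x1^2 + w2*x2^2) * (w0*y0^2 + w1*y1^2 + w2*y2^2) := by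
  nlinarith [mul_nonneg (mul_nonneg h0 h1) (sq_nonneg (x0*y1 - x1*y0)),
    mul_nonneg (mul_nonneg h0 h2) (sq_nonneg (x0*y2 - x2*y0)),
    mul_nonneg (mul_nonneg h1 h2) (sq_nonneg (x1*y2 - x2*y1))]

lemma le_of_sq_le_sq' (x t : ℝ) (h : x^2 ≤ t^2) (ht : 0 ≤ t) : x ≤ t := by
  nlinarith

lemma cs3 (x0 x1 x2 y0 y1 y2 : ℝ) :
    (x0*y0 + x1*y1 + x2*y2)^2 ≤ (x0^2 + x1^2 + x2^2) * (y0^2 + y1^2 + y2^2) := by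
  nlinarith [sq_nonneg (x0*y1 - x1*y0), sq_nonneg (x0*y2 - x2*y0), sq_nonneg (x1*y2 - x2*y1)]

lemma sumBound (u0 u1 u2 v0 v1 v2 o10 o11 o12 o20 o21 o22 t1 t2 : ℝ)
    (n1 : o10^2 + o11^2 + o12^2 = 1) (n2 : o20^2 + o21^2 + o22^2 = 1)
    (n12 : o10*o20 + o11*o21 + o12*o22 = 0)
    (hc0 : u0*v0 + u1*v1 + u2*v2 ≠ 0)
    (ht21 : t2 ≤ t1) (ht2 : 0 ≤ t2)
    (htr : t1^2 + t2^2 = (u0^2+u1^2+u2^2) + (v0^2+v1^2+v2^2))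
    (hdet : t1^2 * t2^2 = (u0^2+u1^2+u2^2)*(v0^2+v1^2+v2^2) - (u0*v0+u1*v1+u2*v2)^2) :
    (o10*u0 + o11*u1 + o12*u2) + (o20*v0 + o21*v1 + o22*v2) ≤ t1 + t2 := by
  obtain ⟨p, hp⟩ : ∃ x : ℝ, x = u0^2+u1^2+u2^2 := ⟨_, rfl⟩
  obtain ⟨q, hq⟩ : ∃ x : ℝ, x = v0^2+v1^2+v2^2 := ⟨_, rfl⟩
  obtain ⟨c0, hc⟩ : ∃ x : ℝ, x = u0*v0+u1*v1+u2*v2 := ⟨_, rfl⟩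
  rw [← hp, ← hq] at htr hdet
  rw [← hc] at hdet hc0
  obtain ⟨r, hrdef⟩ : ∃ x : ℝ, x = t1^2 - t2^2 := ⟨_, rfl⟩
  have hr0 : 0 ≤ r := by nlinarith
  have hr2 : r^2 = (p-q)^2 + 4*c0^2 := by
    rw [hrdef]; linear_combination (t1^2+t2^2+p+q)*htr - 4*hdet
  have hc02 : 0 < c0^2 := by positivity
  have hrpos : 0 < r := by nlinarith
  obtain ⟨cθ, hcθ⟩ : ∃ x : ℝ, x = (p-q)/r := ⟨_, rfl⟩
  obtain ⟨sθ, hsθ⟩ : ∃ x : ℝ, x = 2*c0/r := ⟨_, rfl⟩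
  have hcs1 : cθ^2 + sθ^2 = 1 := by
    rw [hcθ, hsθ]; field_simp; linear_combination -hr2
  have hfac : 0 < r + (p - q) := by nlinarith
  have h1pc : 0 < 1 + cθ := by
    rw [hcθ]
    have h : 1 + (p-q)/r = (r + (p-q))/r := by field_simp
    rw [h]; positivity
  obtain ⟨c, hcdef⟩ : ∃ x : ℝ, x = Real.sqrt ((1 + cθ)/2) := ⟨_, rfl⟩
  have hcpos : 0 < c := by rw [hcdef]; exact Real.sqrt_pos.mpr (by linarith)
  have hc2 : c^2 = (1 + cθ)/2 := by rw [hcdef]; exact Real.sq_sqrt (by linarith)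
  obtain ⟨s, hsdef⟩ : ∃ x : ℝ, x = sθ/(2*c) := ⟨_, rfl⟩
  have hs2 : s^2 = (1 - cθ)/2 := by
    rw [hsdef, div_pow, show (2*c)^2 = 4 * c^2 by ring, hc2]
    rw [div_eq_iff (by positivity)]
    linear_combination hcs1
  have hc2s2 : c^2 + s^2 = 1 := by rw [hc2, hs2]; ring
  have h2cs : 2*c*s = sθ := by
    rw [hsdef]; field_simp
  have ht1v : t1^2 = (p + q + r)/2 := by rw [hrdef]; linarith
  have ht2v : t2^2 = (p + q - r)/2 := by rw [hrdef]; linarith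
  have key1 : c^2*p + 2*c*s*c0 + s^2*q = t1^2 := by
    rw [hc2, hs2, h2cs, hcθ, hsθ, ht1v]
    field_simp
    linear_combination -hr2
  have key2 : s^2*p - 2*c*s*c0 + c^2*q = t2^2 := by
    rw [hc2, hs2, h2cs, hcθ, hsθ, ht2v]
    field_simp
    linear_combination hr2
  have ht1sq : (c*u0+s*v0)^2 + (c*u1+s*v1)^2 + (c*u2+s*v2)^2 = t1^2 := by
    linear_combination key1 - c^2*hp - 2*c*s*hc - s^2*hq
  have ht2sq : (-s*u0+c*v0)^2 + (-s*u1+c*v1)^2 + (-s*u2+c*v2)^2 = t2^2 := by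
    linear_combination key2 - s^2*hp + 2*c*s*hc - c^2*hq
  have H1 : (c*o10+s*o20)^2 + (c*o11+s*o21)^2 + (c*o12+s*o22)^2 = 1 := by
    linear_combination c^2*n1 + s^2*n2 + 2*c*s*n12 + hc2s2
  have H2 : (-s*o10+c*o20)^2 + (-s*o11+c*o21)^2 + (-s*o12+c*o22)^2 = 1 := by
    linear_combination s^2*n1 + c^2*n2 - 2*c*s*n12 + hc2s2
  have hid : (o10*u0 + o11*u1 + o12*u2) + (o20*v0 + o21*v1 + o22*v2) =
      ((c*o10+s*o20)*(c*u0+s*v0) + (c*o11+s*o21)*(c*u1+s*v1) + (c*o12+s*o22)*(c*u2+s*v2))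
      + ((-s*o10+c*o20)*(-s*u0+c*v0) + (-s*o11+c*o21)*(-s*u1+c*v1)
          + (-s*o12+c*o22)*(-s*u2+c*v2)) := by
    linear_combination (-(o10*u0 + o11*u1 + o12*u2) - (o20*v0 + o21*v1 + o22*v2))*hc2s2
  have ht1pos : 0 ≤ t1 := le_trans ht2 ht21
  have hX1 : ((c*o10+s*o20)*(c*u0+s*v0) + (c*o11+s*o21)*(c*u1+s*v1)
      + (c*o12+s*o22)*(c*u2+s*v2)) ≤ t1 := by
    have hcs := cs3 (c*o10+s*o20) (c*o11+s*o21) (c*o12+s*o22) (c*u0+s*v0) (c*u1+s*v1) (c*u2+s*v2)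
    rw [H1, ht1sq, one_mul] at hcs
    exact le_of_sq_le_sq' _ _ hcs ht1pos
  have hX2 : ((-s*o10+c*o20)*(-s*u0+c*v0) + (-s*o11+c*o21)*(-s*u1+c*v1)
      + (-s*o12+c*o22)*(-s*u2+c*v2)) ≤ t2 := by
    have hcs := cs3 (-s*o10+c*o20) (-s*o11+c*o21) (-s*o12+c*o22) (-s*u0+c*v0) (-s*u1+c*v1)
      (-s*u2+c*v2)
    rw [H2, ht2sq, one_mul] at hcs
    exact le_of_sq_le_sq' _ _ hcs ht2
  rw [hid]
  linarith

lemma absSumBound (u0 u1 u2 v0 v1 v2 o10 o11 o12 o20 o21 o22 t1 t2 : ℝ)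
    (n1 : o10^2 + o11^2 + o12^2 = 1) (n2 : o20^2 + o21^2 + o22^2 = 1)
    (n12 : o10*o20 + o11*o21 + o12*o22 = 0)
    (hc0 : u0*v0 + u1*v1 + u2*v2 ≠ 0)
    (ht21 : t2 ≤ t1) (ht2 : 0 ≤ t2)
    (htr : t1^2 + t2^2 = (u0^2+u1^2+u2^2) + (v0^2+v1^2+v2^2))
    (hdet : t1^2 * t2^2 = (u0^2+u1^2+u2^2)*(v0^2+v1^2+v2^2) - (u0*v0+u1*v1+u2*v2)^2) :
    |o10*u0 + o11*u1 + o12*u2| + |o20*v0 + o21*v1 + o22*v2| ≤ t1 + t2 := by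
  have helper : ∀ e f : ℝ, e^2 = 1 → f^2 = 1 →
      e*(o10*u0 + o11*u1 + o12*u2) + f*(o20*v0 + o21*v1 + o22*v2) ≤ t1 + t2 := by
    intro e f he hf
    have h := sumBound u0 u1 u2 v0 v1 v2 (e*o10) (e*o11) (e*o12) (f*o20) (f*o21) (f*o22) t1 t2
      (by linear_combination (o10^2+o11^2+o12^2)*he + n1)
      (by linear_combination (o20^2+o21^2+o22^2)*hf + n2)
      (by linear_combination (e*f)*n12)
      hc0 ht21 ht2 htr hdet
    linarith [h]
  rcases abs_cases (o10*u0 + o11*u1 + o12*u2) with ⟨e1h, -⟩ | ⟨e1h, -⟩ <;>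
    rcases abs_cases (o20*v0 + o21*v1 + o22*v2) with ⟨e2h, -⟩ | ⟨e2h, -⟩ <;>
    rw [e1h, e2h]
  · have := helper 1 1 (by norm_num) (by norm_num); linarith
  · have := helper 1 (-1) (by norm_num) (by norm_num); linarith
  · have := helper (-1) 1 (by norm_num) (by norm_num); linarith
  · have := helper (-1) (-1) (by norm_num) (by norm_num); linarith

lemma finalStep (p q c0 t1 t2 a b : ℝ) (hnec : c0 ≠ 0) (ht21 : t2 ≤ t1) (ht2 : 0 ≤ t2)
    (htr' : t1^2 + t2^2 = p + q) (hdet' : t1^2 * t2^2 = p*q - c0^2)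
    (hp1 : p ≤ 1) (hq1 : q ≤ 1) (hCS : c0^2 ≤ (1-p)*(1-q))
    (ha2 : a^2 ≤ p) (hb2 : b^2 ≤ q) (hsum : |a| + |b| ≤ t1 + t2) :
    h2 ((1 + t1)/2) + h2 ((1 + t2)/2) < h2 ((1 + a)/2) + h2 ((1 + b)/2) := by
  have ht1pos : (0:ℝ) ≤ t1 := le_trans ht2 ht21
  have hc0pos : 0 < c0^2 := by positivity
  have ht2le1 : t2^2 ≤ t1^2 := by nlinarith
  have hprod : 0 ≤ (1 - t1^2)*(1 - t2^2) := by nlinarith [hCS, htr', hdet']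
  have hsumle : t1^2 + t2^2 ≤ 2 := by linarith [htr']
  have ht1sq1 : t1^2 ≤ 1 := by nlinarith [hprod, ht2le1, hsumle]
  have ht1le1 : t1 ≤ 1 := by nlinarith [ht1sq1, ht1pos]
  have hfact : (t1^2 - p)*(t1^2 - q) = c0^2 := by linear_combination (t1^2)*htr' - hdet'
  have hplt : p < t1^2 := by
    by_contra hcon
    push_neg at hcon
    have h1' : t1^2 - q < 0 := by nlinarith [hfact, hc0pos]
    linarith [htr', ht2le1]
  have hqlt : q < t1^2 := by
    by_contra hcon
    push_neg at hcon
    have h1' : t1^2 - p < 0 := by nlinarith [hfact, hc0pos]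
    linarith [htr', ht2le1]
  have hat : |a| < t1 := by nlinarith [ha2, hplt, abs_nonneg a, sq_abs a, ht1pos]
  have hbt : |b| < t1 := by nlinarith [hb2, hqlt, abs_nonneg b, sq_abs b, ht1pos]
  have main := schurF t1 t2 |a| |b| ht2 ht21 ht1le1 (abs_nonneg a) (abs_nonneg b) hat hbt hsum
  rcases abs_cases a with ⟨ea, -⟩ | ⟨ea, -⟩ <;> rcases abs_cases b with ⟨eb, -⟩ | ⟨eb, -⟩ <;>
    rw [ea, eb] at main <;> (try simp only [F_even] at main) <;> exact main

theorem stmt15 (e1 e2 e3 : ℝ) (h1 : |e1| ≤ 1) (h2e : |e2| ≤ 1) (h3 : |e3| ≤ 1)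
    (A B : Matrix (Fin 3) (Fin 3) ℝ) (hA : SO3 A) (hB : SO3 B)
    (R : Matrix (Fin 3) (Fin 3) ℝ)
    (hR : R = B * Matrix.diagonal ![e1, e2, e3] * A)
    (hne : R 0 0 * R 0 1 + R 1 0 * R 1 1 + R 2 0 * R 2 1 ≠ 0)
    (T : Matrix (Fin 3) (Fin 2) ℝ)
    (hT : ∀ (i : Fin 3) (j : Fin 2), T i j = R i j.castSucc)
    (t1 t2 : ℝ) (ht21 : t2 ≤ t1) (ht2 : 0 ≤ t2)
    (htr : t1 ^ 2 + t2 ^ 2 = (T.transpose * T).trace)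
    (hdet : t1 ^ 2 * t2 ^ 2 = (T.transpose * T).det) :
    ∀ O, SO3 O →
      h2 ((1 + t1) / 2) + h2 ((1 + t2) / 2) <
        h2 ((1 + (O * R) 0 0) / 2) + h2 ((1 + (O * R) 1 1) / 2) := by
  intro O hO
  -- e_i^2 ≤ 1
  have he1 : e1^2 ≤ 1 := by nlinarith [sq_abs e1, abs_nonneg e1]
  have he2 : e2^2 ≤ 1 := by nlinarith [sq_abs e2, abs_nonneg e2]
  have he3 : e3^2 ≤ 1 := by nlinarith [sq_abs e3, abs_nonneg e3]
  -- R^T R = A^T D^2 A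
  have hRR : R.transpose * R =
      A.transpose * (Matrix.diagonal ![e1,e2,e3] * Matrix.diagonal ![e1,e2,e3]) * A := by
    rw [hR]
    calc (B * Matrix.diagonal ![e1,e2,e3] * A).transpose * (B * Matrix.diagonal ![e1,e2,e3] * A)
        = A.transpose * (Matrix.diagonal ![e1,e2,e3]).transpose * (B.transpose * B) *
            Matrix.diagonal ![e1,e2,e3] * A := by
          simp only [Matrix.transpose_mul, Matrix.mul_assoc]
      _ = _ := by
          rw [hB.1, Matrix.mul_one]
          simp only [Matrix.diagonal_transpose, Matrix.mul_assoc]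
  -- entries of R^T R
  have E00 := congrFun (congrFun hRR 0) 0
  have E11 := congrFun (congrFun hRR 1) 1
  have E01 := congrFun (congrFun hRR 0) 1
  simp [Matrix.mul_apply, Fin.sum_univ_three, Matrix.transpose_apply,
    Matrix.diagonal_apply, Matrix.one_apply] at E00 E11 E01
  -- orthonormality of columns 0,1 of A
  have a00 := congrFun (congrFun hA.1 0) 0
  have a11 := congrFun (congrFun hA.1 1) 1
  have a01 := congrFun (congrFun hA.1 0) 1
  simp [Matrix.mul_apply, Fin.sum_univ_three, Matrix.transpose_apply,
    Matrix.one_apply] at a00 a11 a01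
  -- orthonormality of rows 0,1 of O
  have hOrow : O * O.transpose = 1 := mul_eq_one_comm.mp hO.1
  have o00 := congrFun (congrFun hOrow 0) 0
  have o11 := congrFun (congrFun hOrow 1) 1
  have o01 := congrFun (congrFun hOrow 0) 1
  simp [Matrix.mul_apply, Fin.sum_univ_three, Matrix.transpose_apply,
    Matrix.one_apply] at o00 o11 o01
  -- trace and determinant of T^T T
  simp [Matrix.trace, Matrix.diag, Matrix.mul_apply, Fin.sum_univ_two, Fin.sum_univ_three,
    Matrix.transpose_apply, hT] at htr
  rw [Matrix.det_fin_two] at hdet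
  simp [Matrix.mul_apply, Fin.sum_univ_three, Matrix.transpose_apply, hT] at hdet
  -- opaque abbreviations
  obtain ⟨p, hpdef⟩ : ∃ x : ℝ, x = R 0 0^2 + R 1 0^2 + R 2 0^2 := ⟨_, rfl⟩
  obtain ⟨q, hqdef⟩ : ∃ x : ℝ, x = R 0 1^2 + R 1 1^2 + R 2 1^2 := ⟨_, rfl⟩
  obtain ⟨c0, hcdef⟩ : ∃ x : ℝ, x = R 0 0 * R 0 1 + R 1 0 * R 1 1 + R 2 0 * R 2 1 := ⟨_, rfl⟩
  have htr' : t1^2 + t2^2 = p + q := by rw [hpdef, hqdef]; linear_combination htr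
  have hdet' : t1^2 * t2^2 = p*q - c0^2 := by
    rw [hpdef, hqdef, hcdef]; linear_combination hdet
  have hnec : c0 ≠ 0 := by rw [hcdef]; exact hne
  -- 1 - p, 1 - q as weighted sums
  have hgx : (1-e1^2)*(A 0 0)^2 + (1-e2^2)*(A 1 0)^2 + (1-e3^2)*(A 2 0)^2 = 1 - p := by
    rw [hpdef]; linear_combination a00 + E00
  have hgy : (1-e1^2)*(A 0 1)^2 + (1-e2^2)*(A 1 1)^2 + (1-e3^2)*(A 2 1)^2 = 1 - q := by
    rw [hqdef]; linear_combination a11 + E11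
  have hgc : (1-e1^2)*(A 0 0)*(A 0 1) + (1-e2^2)*(A 1 0)*(A 1 1) + (1-e3^2)*(A 2 0)*(A 2 1)
      = -c0 := by
    rw [hcdef]; linear_combination a01 + E01
  -- p,q ≤ 1
  have hp1 : p ≤ 1 := by
    have h : 0 ≤ (1-e1^2)*(A 0 0)^2 + (1-e2^2)*(A 1 0)^2 + (1-e3^2)*(A 2 0)^2 :=
      add_nonneg (add_nonneg (mul_nonneg (sub_nonneg.mpr he1) (sq_nonneg _))
        (mul_nonneg (sub_nonneg.mpr he2) (sq_nonneg _)))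
        (mul_nonneg (sub_nonneg.mpr he3) (sq_nonneg _))
    rw [hgx] at h
    exact sub_nonneg.mp h
  have hq1 : q ≤ 1 := by
    have h : 0 ≤ (1-e1^2)*(A 0 1)^2 + (1-e2^2)*(A 1 1)^2 + (1-e3^2)*(A 2 1)^2 :=
      add_nonneg (add_nonneg (mul_nonneg (sub_nonneg.mpr he1) (sq_nonneg _))
        (mul_nonneg (sub_nonneg.mpr he2) (sq_nonneg _)))
        (mul_nonneg (sub_nonneg.mpr he3) (sq_nonneg _))
    rw [hgy] at h
    exact sub_nonneg.mp h
  -- c0^2 ≤ (1-p)(1-q)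
  have hCS : c0^2 ≤ (1-p)*(1-q) := by
    have hgw := cs3w (1-e1^2) (1-e2^2) (1-e3^2) (A 0 0) (A 1 0) (A 2 0) (A 0 1) (A 1 1) (A 2 1)
      (sub_nonneg.mpr he1) (sub_nonneg.mpr he2) (sub_nonneg.mpr he3)
    rw [hgx, hgy] at hgw
    have hsq : ((1-e1^2)*(A 0 0)*(A 0 1) + (1-e2^2)*(A 1 0)*(A 1 1)
        + (1-e3^2)*(A 2 0)*(A 2 1))^2 = c0^2 := by rw [hgc]; ring
    rw [← hsq]
    exact hgw
  -- diagonal entries of O*R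
  have haOR : (O*R) 0 0 = O 0 0 * R 0 0 + O 0 1 * R 1 0 + O 0 2 * R 2 0 := by
    simp [Matrix.mul_apply, Fin.sum_univ_three]
  have hbOR : (O*R) 1 1 = O 1 0 * R 0 1 + O 1 1 * R 1 1 + O 1 2 * R 2 1 := by
    simp [Matrix.mul_apply, Fin.sum_univ_three]
  obtain ⟨a, hadef⟩ : ∃ x : ℝ, x = O 0 0 * R 0 0 + O 0 1 * R 1 0 + O 0 2 * R 2 0 := ⟨_, rfl⟩
  obtain ⟨b, hbdef⟩ : ∃ x : ℝ, x = O 1 0 * R 0 1 + O 1 1 * R 1 1 + O 1 2 * R 2 1 := ⟨_, rfl⟩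
  -- a^2 ≤ p, b^2 ≤ q
  have ha2 : a^2 ≤ p := by
    have hc := cs3 (O 0 0) (O 0 1) (O 0 2) (R 0 0) (R 1 0) (R 2 0)
    rw [show O 0 0^2 + O 0 1^2 + O 0 2^2 = 1 from by linear_combination o00, one_mul] at hc
    rw [hadef, hpdef]
    exact hc
  have hb2 : b^2 ≤ q := by
    have hc := cs3 (O 1 0) (O 1 1) (O 1 2) (R 0 1) (R 1 1) (R 2 1)
    rw [show O 1 0^2 + O 1 1^2 + O 1 2^2 = 1 from by linear_combination o11, one_mul] at hc
    rw [hbdef, hqdef]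
    exact hc
  -- |a| + |b| ≤ t1 + t2
  have hsum := absSumBound (R 0 0) (R 1 0) (R 2 0) (R 0 1) (R 1 1) (R 2 1)
    (O 0 0) (O 0 1) (O 0 2) (O 1 0) (O 1 1) (O 1 2) t1 t2
    (by linear_combination o00) (by linear_combination o11) (by linear_combination o01)
    hne ht21 ht2 (by linear_combination htr) (by linear_combination hdet)
  rw [← hadef, ← hbdef] at hsum
  -- conclude
  rw [haOR, hbOR, ← hadef, ← hbdef]
  exact finalStep p q c0 t1 t2 a b hnec ht21 ht2 htr' hdet' hp1 hq1 hCS ha2 hb2 hsum
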